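/- arXiv:1902.08149 — 2 statements merged into one kernel-verified Lean document; each statement's English description precedes it below -/
import Mathlib

section
/- Every trimmed unambiguous automaton is SCC-unambiguous. -/
variable {Q Q' A R : Type*}

/-- `RunFrom Δ p w ρ`: `ρ` is the list of states visited after `p` along a run
reading `w` that starts in `p`. -/
def RunFrom (Δ : Q → A → Q → Prop) : Q → List A → List Q → Prop
  | _, [], [] => True
  | p, a :: w, q :: ρ => Δ p a q ∧ RunFrom Δ q w ρ
  | _, _, _ => False

/-- There is a run from `p` to `q` reading `w`. -/
def HasRun (Δ : Q → A → Q → Prop) (p : Q) (w : List A) (q : Q) : Prop :=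
  ∃ ρ, RunFrom Δ p w ρ ∧ (p :: ρ).getLast (List.cons_ne_nil _ _) = q

/-- `m`-fold power of a word. -/
def wpow (u : List A) (m : ℕ) : List A := (List.replicate m u).flatten

/-- Aperiodicity of a nondeterministic automaton. -/
def Aperiodic (Δ : Q → A → Q → Prop) : Prop :=
  ∃ m, 1 ≤ m ∧ ∀ (p q : Q) (u : List A), u ≠ [] →
    (HasRun Δ p (wpow u m) q ↔ HasRun Δ p (wpow u (m + 1)) q)

/-- `p` and `q` are in the same strongly connected component. -/
def SameSCC (Δ : Q → A → Q → Prop) (p q : Q) : Prop :=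
  p = q ∨ ((∃ u : List A, u ≠ [] ∧ HasRun Δ p u q) ∧ (∃ v : List A, v ≠ [] ∧ HasRun Δ q v p))

/-- The automaton is unambiguous from `p` to `q`. -/
def UnambFromTo (Δ : Q → A → Q → Prop) (p q : Q) : Prop :=
  ∀ (u : List A) (ρ₁ ρ₂ : List Q), u ≠ [] →
    RunFrom Δ p u ρ₁ → RunFrom Δ p u ρ₂ →
    (p :: ρ₁).getLast (List.cons_ne_nil _ _) = q →
    (p :: ρ₂).getLast (List.cons_ne_nil _ _) = q → ρ₁ = ρ₂

def SCCUnambiguous (Δ : Q → A → Q → Prop) : Prop :=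
  ∀ p q : Q, SameSCC Δ p q → UnambFromTo Δ p q

/-- The set of accepting runs on `w`, represented as pairs of an initial state and
the list of subsequently visited states. -/
def AccRuns (Δ : Q → A → Q → Prop) (I F : Set Q) (w : List A) : Set (Q × List Q) :=
  {x | x.1 ∈ I ∧ RunFrom Δ x.1 w x.2 ∧ (x.1 :: x.2).getLast (List.cons_ne_nil _ _) ∈ F}

/-- The sequence of weights along a run. -/
def wgtSeq (wgt : Q → A → Q → R) : Q → List A → List Q → List R
  | p, a :: w, q :: ρ => wgt p a q :: wgtSeq wgt q w ρ
  | _, _, _ => []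



lemma runFrom_length {Δ : Q → A → Q → Prop} :
    ∀ (w : List A) (p : Q) (ρ : List Q), RunFrom Δ p w ρ → ρ.length = w.length := by
  intro w
  induction w with
  | nil =>
    intro p ρ h
    cases ρ with
    | nil => rfl
    | cons r ρ => exact absurd h (by simp [RunFrom])
  | cons a w ih =>
    intro p ρ h
    cases ρ with
    | nil => exact absurd h (by simp [RunFrom])
    | cons r ρ =>
      obtain ⟨-, h2⟩ := h
      simp [ih r ρ h2]

lemma getLast_cons_append' (p q : Q) (ρ σ : List Q)
    (h : (p :: ρ).getLast (List.cons_ne_nil _ _) = q) :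
    (p :: (ρ ++ σ)).getLast (List.cons_ne_nil _ _) = (q :: σ).getLast (List.cons_ne_nil _ _) := by
  induction ρ generalizing p with
  | nil =>
    simp only [List.getLast_singleton] at h
    subst h
    simp
  | cons r ρ ih =>
    rw [List.getLast_cons (List.cons_ne_nil _ _)] at h
    rw [List.cons_append, List.getLast_cons (by simp)]
    exact ih r h

lemma runFrom_append {Δ : Q → A → Q → Prop} :
    ∀ (u : List A) (p : Q) (ρ : List Q) (v : List A) (q : Q) (σ : List Q),
    RunFrom Δ p u ρ → (p :: ρ).getLast (List.cons_ne_nil _ _) = q → RunFrom Δ q v σ →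
    RunFrom Δ p (u ++ v) (ρ ++ σ) := by
  intro u
  induction u with
  | nil =>
    intro p ρ v q σ h1 h2 h3
    cases ρ with
    | nil => simp at h2; subst h2; simpa using h3
    | cons r ρ => exact absurd h1 (by simp [RunFrom])
  | cons a u ih =>
    intro p ρ v q σ h1 h2 h3
    cases ρ with
    | nil => exact absurd h1 (by simp [RunFrom])
    | cons r ρ =>
      obtain ⟨hd, h1'⟩ := h1
      have h2' : (r :: ρ).getLast (List.cons_ne_nil _ _) = q := by
        rwa [List.getLast_cons (List.cons_ne_nil _ _)] at h2
      exact ⟨hd, ih r ρ v q σ h1' h2' h3⟩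

lemma runFrom_split {Δ : Q → A → Q → Prop} :
    ∀ (w : List A) (i : Q) (ρ : List Q) (q : Q),
    RunFrom Δ i w ρ → q ∈ i :: ρ →
    ∃ w1 w2 π τ, w = w1 ++ w2 ∧ ρ = π ++ τ ∧ RunFrom Δ i w1 π ∧
      (i :: π).getLast (List.cons_ne_nil _ _) = q ∧ RunFrom Δ q w2 τ := by
  intro w
  induction w with
  | nil =>
    intro i ρ q h hq
    cases ρ with
    | nil =>
      simp at hq; subst hq
      exact ⟨[], [], [], [], rfl, rfl, trivial, rfl, trivial⟩
    | cons r ρ => exact absurd h (by simp [RunFrom])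
  | cons a w ih =>
    intro i ρ q h hq
    cases ρ with
    | nil => exact absurd h (by simp [RunFrom])
    | cons r ρ =>
      obtain ⟨hd, h'⟩ := h
      rcases List.mem_cons.mp hq with hqi | hq'
      · subst hqi
        exact ⟨[], a :: w, [], r :: ρ, rfl, rfl, trivial, rfl, ⟨hd, h'⟩⟩
      · obtain ⟨w1, w2, π, τ, hw, hρ, hπ, hlast, hτ⟩ := ih r ρ q h' hq'
        refine ⟨a :: w1, w2, r :: π, τ, by simp [hw], by simp [hρ], ⟨hd, hπ⟩, ?_, hτ⟩
        rwa [List.getLast_cons (List.cons_ne_nil _ _)]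

/-- Every trimmed unambiguous automaton is SCC-unambiguous. -/
theorem sccUnambiguous_of_unambiguous (Δ : Q → A → Q → Prop) (I F : Set Q)
    (htrim : ∀ q : Q, ∃ (w : List A) (x : Q × List Q),
      x ∈ AccRuns Δ I F w ∧ q ∈ x.1 :: x.2)
    (hunamb : ∀ w : List A, ∀ x y : Q × List Q,
      x ∈ AccRuns Δ I F w → y ∈ AccRuns Δ I F w → x = y) :
    SCCUnambiguous Δ := by
  rintro p q hscc u ρ₁ ρ₂ hu hρ₁ hρ₂ hl₁ hl₂
  -- get a path from q back to p
  obtain ⟨v, σ, hσ, hlσ⟩ : ∃ (v : List A) (σ : List Q),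
      RunFrom Δ q v σ ∧ (q :: σ).getLast (List.cons_ne_nil _ _) = p := by
    rcases hscc with h | ⟨-, ⟨v, -, σ, hσ, hlσ⟩⟩
    · exact ⟨[], [], trivial, h.symm⟩
    · exact ⟨v, σ, hσ, hlσ⟩
  -- get an accepting run through p
  obtain ⟨w, ⟨i, ρ0⟩, ⟨hI, hρ0, hF⟩, hp⟩ := htrim p
  obtain ⟨w1, w2, π, τ, hw, hρ0eq, hπ, hlπ, hτ⟩ := runFrom_split w i ρ0 p hρ0 hp
  subst hρ0eq
  -- compose accepting runs
  have comp : ∀ ρ : List Q, RunFrom Δ p u ρ →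
      (p :: ρ).getLast (List.cons_ne_nil _ _) = q →
      (i, π ++ (ρ ++ (σ ++ τ))) ∈ AccRuns Δ I F (w1 ++ (u ++ (v ++ w2))) := by
    intro ρ hρ hlρ
    refine ⟨hI, ?_, ?_⟩
    · exact runFrom_append w1 i π _ p _ hπ hlπ
        (runFrom_append u p ρ _ q _ hρ hlρ
          (runFrom_append v q σ w2 p τ hσ hlσ hτ))
    · have e1 := getLast_cons_append' i p π (ρ ++ (σ ++ τ)) hlπ
      have e2 := getLast_cons_append' p q ρ (σ ++ τ) hlρ
      have e3 := getLast_cons_append' q p σ τ hlσ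
      have e4 := getLast_cons_append' i p π τ hlπ
      show (i :: (π ++ (ρ ++ (σ ++ τ)))).getLast (List.cons_ne_nil _ _) ∈ F
      rw [e1, e2, e3, ← e4]
      exact hF
  have h1 := comp ρ₁ hρ₁ hl₁
  have h2 := comp ρ₂ hρ₂ hl₂
  have := hunamb _ _ _ h1 h2
  have hlist : π ++ (ρ₁ ++ (σ ++ τ)) = π ++ (ρ₂ ++ (σ ++ τ)) := congrArg Prod.snd this
  have hcancel : ρ₁ ++ (σ ++ τ) = ρ₂ ++ (σ ++ τ) := List.append_cancel_left hlist
  have hlen : ρ₁.length = ρ₂.length := by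
    rw [runFrom_length u p ρ₁ hρ₁, runFrom_length u p ρ₂ hρ₂]
  exact (List.append_inj hcancel hlen).1
end

section
/- If A is an aperiodic nondeterministic automaton with aperiodicity index m, then for every k ≥ 1 the automaton A_{≥k} (tracking k lexicographically ordered runs of A with difference bits) is aperiodic with aperiodicity index k(m+1). -/
variable {Q Q' A R : Type*}

/-- Aperiodicity with a given index `m`: for all exponents `ℓ ≥ m`, the word powers
`u^ℓ` and `u^(ℓ+1)` connect the same pairs of states. -/
def AperiodicIdx (Δ : Q → A → Q → Prop) (m : ℕ) : Prop :=
  1 ≤ m ∧ ∀ (p q : Q) (u : List A), u ≠ [] → ∀ ℓ, m ≤ ℓ →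
    (HasRun Δ p (wpow u ℓ) q ↔ HasRun Δ p (wpow u (ℓ + 1)) q)

/-- Transition relation of the automaton `A_{≥k}` tracking `k` lexicographically
ordered runs of `A` together with difference bits. -/
def AkTrans (Δ : Q → A → Q → Prop) (lt : Q → Q → Prop) (k : ℕ) :
    ((Fin k → Q) × (Fin (k - 1) → Bool)) → A → ((Fin k → Q) × (Fin (k - 1) → Bool)) → Prop :=
  fun x a y =>
    (∀ ℓ : Fin k, Δ (x.1 ℓ) a (y.1 ℓ)) ∧
    ∀ ℓ : Fin (k - 1),
      (x.2 ℓ = false ∧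
        y.1 ⟨ℓ.val, by have := ℓ.isLt; omega⟩ = y.1 ⟨ℓ.val + 1, by have := ℓ.isLt; omega⟩ ∧
        y.2 ℓ = false) ∨
      ((x.2 ℓ = true ∨
          lt (y.1 ⟨ℓ.val, by have := ℓ.isLt; omega⟩) (y.1 ⟨ℓ.val + 1, by have := ℓ.isLt; omega⟩)) ∧
        y.2 ℓ = true)


section Basic
variable {Δ : Q → A → Q → Prop}

theorem runFrom_nil_iff {p : Q} {ρ : List Q} : RunFrom Δ p [] ρ ↔ ρ = [] := by
  cases ρ <;> simp [RunFrom]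

theorem runFrom_cons_iff {p : Q} {a : A} {w : List A} {ρ : List Q} :
    RunFrom Δ p (a :: w) ρ ↔ ∃ q ρ', ρ = q :: ρ' ∧ Δ p a q ∧ RunFrom Δ q w ρ' := by
  cases ρ with
  | nil => simp [RunFrom]
  | cons q ρ' =>
    simp only [RunFrom]
    constructor
    · rintro ⟨h1, h2⟩; exact ⟨q, ρ', rfl, h1, h2⟩
    · rintro ⟨q', ρ'', heq, h1, h2⟩
      cases heq; exact ⟨h1, h2⟩

def lastS {α : Type*} (p : α) (ρ : List α) : α := (p :: ρ).getLast (List.cons_ne_nil _ _)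

@[simp] theorem lastS_nil {α : Type*} (p : α) : lastS p ([] : List α) = p := rfl

@[simp] theorem lastS_cons {α : Type*} (p q : α) (ρ : List α) :
    lastS p (q :: ρ) = lastS q ρ := by
  simp [lastS, List.getLast_cons]

theorem lastS_append {α : Type*} (p : α) (ρ₁ ρ₂ : List α) :
    lastS p (ρ₁ ++ ρ₂) = lastS (lastS p ρ₁) ρ₂ := by
  induction ρ₁ generalizing p with
  | nil => rfl
  | cons a t ih => simpa using ih a

theorem lastS_map {α β : Type*} (g : α → β) (x : α) (ρ : List α) :
    lastS (g x) (ρ.map g) = g (lastS x ρ) := by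
  induction ρ generalizing x with
  | nil => rfl
  | cons a t ih => simpa using ih a

theorem lastS_mem {α : Type*} (x : α) {ρ : List α} (h : ρ ≠ []) : lastS x ρ ∈ ρ := by
  rw [lastS, List.getLast_cons h]; exact List.getLast_mem h

theorem hasRun_iff {p q : Q} {w : List A} :
    HasRun Δ p w q ↔ ∃ ρ, RunFrom Δ p w ρ ∧ lastS p ρ = q := Iff.rfl

theorem hasRun_nil {p q : Q} : HasRun Δ p [] q ↔ p = q := by
  constructor
  · rintro ⟨ρ, hr, hl⟩
    rw [runFrom_nil_iff] at hr; subst hr; exact hl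
  · rintro rfl; exact ⟨[], runFrom_nil_iff.mpr rfl, rfl⟩

theorem runFrom_ne_nil {p : Q} {w : List A} {ρ : List Q} (h : RunFrom Δ p w ρ)
    (hw : w ≠ []) : ρ ≠ [] := by
  cases w with
  | nil => exact absurd rfl hw
  | cons a w =>
    rcases runFrom_cons_iff.mp h with ⟨q, ρ', rfl, _, _⟩
    simp

theorem runFrom_append_s6 {p : Q} {w₁ w₂ : List A} {ρ₁ ρ₂ : List Q}
    (h₁ : RunFrom Δ p w₁ ρ₁) (h₂ : RunFrom Δ (lastS p ρ₁) w₂ ρ₂) :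
    RunFrom Δ p (w₁ ++ w₂) (ρ₁ ++ ρ₂) := by
  induction w₁ generalizing p ρ₁ with
  | nil =>
    rw [runFrom_nil_iff] at h₁; subst h₁; simpa using h₂
  | cons a w ih =>
    rcases runFrom_cons_iff.mp h₁ with ⟨q, ρ', rfl, hd, tl⟩
    exact runFrom_cons_iff.mpr ⟨q, ρ' ++ ρ₂, rfl, hd, ih tl (by simpa using h₂)⟩

theorem runFrom_append_inv {p : Q} {w₁ w₂ : List A} {ρ : List Q}
    (h : RunFrom Δ p (w₁ ++ w₂) ρ) :
    ∃ ρ₁ ρ₂, ρ = ρ₁ ++ ρ₂ ∧ RunFrom Δ p w₁ ρ₁ ∧ RunFrom Δ (lastS p ρ₁) w₂ ρ₂ := by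
  induction w₁ generalizing p ρ with
  | nil => exact ⟨[], ρ, rfl, runFrom_nil_iff.mpr rfl, h⟩
  | cons a w ih =>
    rcases runFrom_cons_iff.mp h with ⟨q, ρ', rfl, hd, tl⟩
    rcases ih tl with ⟨ρ₁, ρ₂, rfl, h1, h2⟩
    exact ⟨q :: ρ₁, ρ₂, rfl, runFrom_cons_iff.mpr ⟨q, ρ₁, rfl, hd, h1⟩, by simpa using h2⟩

theorem HasRun.trans {p r q : Q} {w₁ w₂ : List A}
    (h₁ : HasRun Δ p w₁ r) (h₂ : HasRun Δ r w₂ q) : HasRun Δ p (w₁ ++ w₂) q := by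
  obtain ⟨ρ₁, hr₁, hl₁⟩ := h₁
  obtain ⟨ρ₂, hr₂, hl₂⟩ := h₂
  have hl₁' : lastS p ρ₁ = r := hl₁
  refine ⟨ρ₁ ++ ρ₂, runFrom_append_s6 hr₁ (by rw [hl₁']; exact hr₂), ?_⟩
  show lastS p (ρ₁ ++ ρ₂) = q
  rw [lastS_append, hl₁']; exact hl₂

theorem hasRun_append_iff {p q : Q} {w₁ w₂ : List A} :
    HasRun Δ p (w₁ ++ w₂) q ↔ ∃ r, HasRun Δ p w₁ r ∧ HasRun Δ r w₂ q := by
  constructor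
  · rintro ⟨ρ, hr, hl⟩
    rcases runFrom_append_inv hr with ⟨ρ₁, ρ₂, rfl, h1, h2⟩
    refine ⟨lastS p ρ₁, ⟨ρ₁, h1, rfl⟩, ⟨ρ₂, h2, ?_⟩⟩
    show lastS (lastS p ρ₁) ρ₂ = q
    rw [← lastS_append]; exact hl
  · rintro ⟨r, h1, h2⟩; exact h1.trans h2

@[simp] theorem wpow_zero (u : List A) : wpow u 0 = [] := rfl

theorem wpow_one (u : List A) : wpow u 1 = u := by simp [wpow]

theorem wpow_add (u : List A) (a b : ℕ) : wpow u (a + b) = wpow u a ++ wpow u b := by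
  unfold wpow
  rw [List.replicate_add, List.flatten_append]

theorem wpow_ne_nil {u : List A} (hu : u ≠ []) {n : ℕ} (hn : 1 ≤ n) : wpow u n ≠ [] := by
  cases n with
  | zero => omega
  | succ n =>
    rw [show n + 1 = 1 + n by omega, wpow_add, wpow_one]
    simp [hu]

theorem hasRun_of_steps {u : List A} {s : ℕ → Q} {L : ℕ}
    (hs : ∀ j < L, HasRun Δ (s j) u (s (j + 1))) :
    ∀ a b, a ≤ b → b ≤ L → HasRun Δ (s a) (wpow u (b - a)) (s b) := by
  intro a b hab hbL
  induction b, hab using Nat.le_induction with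
  | base => rw [Nat.sub_self, wpow_zero]; exact hasRun_nil.mpr rfl
  | succ b hab ih =>
    have h1 : b + 1 - a = (b - a) + 1 := by omega
    rw [h1, wpow_add, wpow_one]
    exact (ih (by omega)).trans (hs b (by omega))

theorem steps_of_hasRun {u : List A} {x y : Q} {L : ℕ}
    (h : HasRun Δ x (wpow u L) y) :
    ∃ s : ℕ → Q, s 0 = x ∧ s L = y ∧ ∀ j < L, HasRun Δ (s j) u (s (j + 1)) := by
  induction L generalizing y with
  | zero =>
    rw [wpow_zero, hasRun_nil] at h
    exact ⟨fun _ => x, rfl, h, fun j hj => absurd hj (by omega)⟩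
  | succ L ih =>
    rw [wpow_add, hasRun_append_iff] at h
    obtain ⟨r, h1, h2⟩ := h
    obtain ⟨s, hs0, hsL, hstep⟩ := ih h1
    refine ⟨fun j => if j ≤ L then s j else y, by simp [hs0], by simp, ?_⟩
    intro j hj
    by_cases hjL : j < L
    · show HasRun Δ (if j ≤ L then s j else y) u (if j + 1 ≤ L then s (j + 1) else y)
      rw [if_pos (by omega), if_pos (by omega)]
      exact hstep j hjL
    · have hjeq : j = L := by omega
      show HasRun Δ (if j ≤ L then s j else y) u (if j + 1 ≤ L then s (j + 1) else y)
      rw [if_pos (by omega), if_neg (by omega), hjeq, hsL]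
      rw [wpow_one] at h2
      exact h2

end Basic

section Ak
variable {Δ : Q → A → Q → Prop} {lt : Q → Q → Prop} {k : ℕ}

/-- Left and right embeddings of a bit index into `Fin k`. -/
def finL {k : ℕ} (j : Fin (k - 1)) : Fin k := ⟨j.val, by have := j.isLt; omega⟩
def finR {k : ℕ} (j : Fin (k - 1)) : Fin k := ⟨j.val + 1, by have := j.isLt; omega⟩

theorem akTrans_target_merge {x y : (Fin k → Q) × (Fin (k - 1) → Bool)} {a : A}
    (h : AkTrans Δ lt k x a y) {j : Fin (k - 1)} (hj : y.2 j = false) :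
    y.1 (finL j) = y.1 (finR j) := by
  rcases h.2 j with ⟨_, he, _⟩ | ⟨_, ht⟩
  · exact he
  · rw [ht] at hj; cases hj

theorem akTrans_bit_back {x y : (Fin k → Q) × (Fin (k - 1) → Bool)} {a : A}
    (h : AkTrans Δ lt k x a y) {j : Fin (k - 1)} (hj : y.2 j = false) : x.2 j = false := by
  rcases h.2 j with ⟨hx, _, _⟩ | ⟨_, ht⟩
  · exact hx
  · rw [ht] at hj; cases hj

theorem runFrom_proj {x : (Fin k → Q) × (Fin (k - 1) → Bool)} {w : List A}
    {ρ : List ((Fin k → Q) × (Fin (k - 1) → Bool))}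
    (h : RunFrom (AkTrans Δ lt k) x w ρ) (i : Fin k) :
    RunFrom Δ (x.1 i) w (ρ.map (fun z => z.1 i)) := by
  induction w generalizing x ρ with
  | nil => rw [runFrom_nil_iff] at h; subst h; exact runFrom_nil_iff.mpr rfl
  | cons a w ih =>
    rcases runFrom_cons_iff.mp h with ⟨y, ρ', rfl, hd, tl⟩
    exact runFrom_cons_iff.mpr ⟨y.1 i, ρ'.map (fun z => z.1 i), by simp, hd.1 i, ih tl⟩

theorem runFrom_bits_false {x : (Fin k → Q) × (Fin (k - 1) → Bool)} {w : List A}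
    {ρ : List ((Fin k → Q) × (Fin (k - 1) → Bool))}
    (h : RunFrom (AkTrans Δ lt k) x w ρ) {j : Fin (k - 1)}
    (hj : (lastS x ρ).2 j = false) : x.2 j = false ∧ ∀ z ∈ ρ, z.2 j = false := by
  induction w generalizing x ρ with
  | nil =>
    rw [runFrom_nil_iff] at h; subst h
    exact ⟨hj, by simp⟩
  | cons a w ih =>
    rcases runFrom_cons_iff.mp h with ⟨y, ρ', rfl, hd, tl⟩
    have ihy := ih tl (by rw [← lastS_cons x y ρ']; exact hj)
    refine ⟨akTrans_bit_back hd ihy.1, ?_⟩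
    intro z hz
    rcases List.mem_cons.mp hz with rfl | hz
    · exact ihy.1
    · exact ihy.2 z hz

theorem runFrom_merge {x : (Fin k → Q) × (Fin (k - 1) → Bool)} {w : List A}
    {ρ : List ((Fin k → Q) × (Fin (k - 1) → Bool))}
    (h : RunFrom (AkTrans Δ lt k) x w ρ) :
    ∀ z ∈ ρ, ∀ j : Fin (k - 1), z.2 j = false → z.1 (finL j) = z.1 (finR j) := by
  induction w generalizing x ρ with
  | nil => rw [runFrom_nil_iff] at h; subst h; simp
  | cons a w ih =>
    rcases runFrom_cons_iff.mp h with ⟨y, ρ', rfl, hd, tl⟩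
    intro z hz j hzj
    rcases List.mem_cons.mp hz with rfl | hz
    · exact akTrans_target_merge hd hzj
    · exact ih tl z hz j hzj

theorem runFrom_mk {f : Fin k → Q} {c : Fin (k - 1) → Bool} {w : List A}
    {ρ : Fin k → List Q}
    (hr : ∀ i, RunFrom Δ (f i) w (ρ i))
    (hsh : ∀ j : Fin (k - 1), c j = false → ρ (finL j) = ρ (finR j)) :
    ∃ rr, RunFrom (AkTrans Δ lt k) (f, c) w rr ∧
      lastS (f, c) rr = ((fun i => lastS (f i) (ρ i)), c) := by
  induction w generalizing f ρ with
  | nil =>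
    have hρ : ∀ i, ρ i = [] := fun i => runFrom_nil_iff.mp (hr i)
    refine ⟨[], runFrom_nil_iff.mpr rfl, ?_⟩
    rw [lastS_nil]
    refine Prod.ext ?_ rfl
    funext i
    show f i = lastS (f i) (ρ i)
    rw [hρ i, lastS_nil]
  | cons a w ih =>
    choose q ρ' hcons hd tl using fun i => runFrom_cons_iff.mp (hr i)
    have hsh' : ∀ j : Fin (k - 1), c j = false → ρ' (finL j) = ρ' (finR j) := by
      intro j hj
      have h2 := hsh j hj
      rw [hcons (finL j), hcons (finR j)] at h2
      injection h2
    have hq : ∀ j : Fin (k - 1), c j = false → q (finL j) = q (finR j) := by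
      intro j hj
      have h2 := hsh j hj
      rw [hcons (finL j), hcons (finR j)] at h2
      injection h2
    obtain ⟨rr, hrun, hlast⟩ := ih (f := q) (ρ := ρ') tl hsh'
    refine ⟨(q, c) :: rr, runFrom_cons_iff.mpr ⟨(q, c), rr, rfl, ⟨hd, ?_⟩, hrun⟩, ?_⟩
    · intro j
      cases hcj : c j with
      | false => exact Or.inl ⟨hcj, hq j hcj, hcj⟩
      | true => exact Or.inr ⟨Or.inl hcj, hcj⟩
    · rw [lastS_cons, hlast]
      refine Prod.ext ?_ rfl
      funext i
      show lastS (q i) (ρ' i) = lastS (f i) (ρ i)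
      rw [hcons i, lastS_cons]

end Ak

section Pump
variable {Δ : Q → A → Q → Prop} {lt : Q → Q → Prop} {k : ℕ}

theorem pump_stretch {w w' : List A}
    (htrans : ∀ p q : Q, HasRun Δ p w q → HasRun Δ p w' q)
    {x y : (Fin k → Q) × (Fin (k - 1) → Bool)} (hbits : x.2 = y.2)
    (hmerge : ∀ j : Fin (k - 1), x.2 j = false → x.1 (finL j) = x.1 (finR j))
    (hxy : HasRun (AkTrans Δ lt k) x w y) :
    HasRun (AkTrans Δ lt k) x w' y := by
  classical
  obtain ⟨rr, hrun, hlast'⟩ := hxy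
  have hlast : lastS x rr = y := hlast'
  have hcomp : ∀ i, HasRun Δ (x.1 i) w (y.1 i) := by
    intro i
    refine ⟨rr.map (fun z => z.1 i), runFrom_proj hrun i, ?_⟩
    show lastS (x.1 i) (rr.map (fun z => z.1 i)) = y.1 i
    rw [lastS_map (fun z => z.1 i) x rr, hlast]
  have hmergey : ∀ j : Fin (k - 1), x.2 j = false → y.1 (finL j) = y.1 (finR j) := by
    intro j hj
    have hyj : y.2 j = false := by rw [← hbits]; exact hj
    have hmem : lastS x rr ∈ x :: rr := by
      rw [lastS]; exact List.getLast_mem _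
    rw [hlast] at hmem
    rcases List.mem_cons.mp hmem with heq | hmem
    · rw [heq]; exact hmerge j hj
    · exact runFrom_merge hrun y hmem j hyj
  have hcomp' : ∀ i, HasRun Δ (x.1 i) w' (y.1 i) := fun i => htrans _ _ (hcomp i)
  let σ : Q → Q → List Q := fun p q => if h : HasRun Δ p w' q then h.choose else []
  have hσ : ∀ i, RunFrom Δ (x.1 i) w' (σ (x.1 i) (y.1 i)) ∧
      lastS (x.1 i) (σ (x.1 i) (y.1 i)) = y.1 i := by
    intro i
    have hh := hcomp' i
    have hσeq : σ (x.1 i) (y.1 i) = hh.choose := dif_pos hh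
    rw [hσeq]
    exact hh.choose_spec
  obtain ⟨rr', hrun', hlast2⟩ := runFrom_mk (lt := lt) (f := x.1) (c := x.2)
      (ρ := fun i => σ (x.1 i) (y.1 i)) (fun i => (hσ i).1)
      (fun j hj => by
        show σ (x.1 (finL j)) (y.1 (finL j)) = σ (x.1 (finR j)) (y.1 (finR j))
        rw [hmerge j hj, hmergey j hj])
  refine ⟨rr', hrun', ?_⟩
  show lastS x rr' = y
  rw [show x = (x.1, x.2) from rfl] at *
  rw [hlast2]
  exact Prod.ext (funext fun i => (hσ i).2) hbits

end Pump

theorem exists_flat (g : ℕ → ℕ) (k t N : ℕ)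
    (hmono : ∀ a b, a ≤ b → b ≤ N → g a ≤ g b)
    (hbd : ∀ j, j ≤ N → g j ≤ k - 1) (hk : 1 ≤ k) (hN : 1 + k * t ≤ N) (ht : 1 ≤ t) :
    ∃ a, 1 ≤ a ∧ a + t ≤ N ∧ g a = g (a + t) := by
  by_contra hcon
  push_neg at hcon
  have key : ∀ j, j ≤ k → g 1 + j ≤ g (1 + j * t) := by
    intro j hj
    induction j with
    | zero => simp
    | succ j ih =>
      have hjk : j ≤ k := by omega
      have hmul : (j + 1) * t ≤ k * t := Nat.mul_le_mul_right t hj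
      have hmul' : (j + 1) * t = j * t + t := by ring
      have hb1 : 1 + j * t + t ≤ N := by omega
      have hne := hcon (1 + j * t) (by omega) (by omega)
      have hle := hmono (1 + j * t) (1 + j * t + t) (by omega) hb1
      have := ih hjk
      have : g (1 + j * t) < g (1 + j * t + t) := by
        rcases lt_or_eq_of_le hle with h | h
        · exact h
        · exact absurd h hne
      have harr : 1 + (j + 1) * t = 1 + j * t + t := by ring
      rw [harr]
      omega
  have h1 := key k le_rfl
  have h2 := hbd (1 + k * t) (by omega)
  have h3 := hbd 1 (by omega)
  omega

theorem boolvec_eq {n : ℕ} {f g : Fin n → Bool} (hle : ∀ i, f i = true → g i = true)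
    (hcard : (Finset.univ.filter (fun i => f i = true)).card =
      (Finset.univ.filter (fun i => g i = true)).card) : f = g := by
  classical
  have hsub : (Finset.univ.filter (fun i => f i = true)) ⊆
      (Finset.univ.filter (fun i => g i = true)) := by
    intro i hi
    simp only [Finset.mem_filter, Finset.mem_univ, true_and] at *
    exact hle i hi
  have heq := Finset.eq_of_subset_of_card_le hsub hcard.ge
  funext i
  cases hf : f i with
  | true => rw [hle i hf]
  | false =>
    cases hg : g i with
    | false => rfl
    | true =>
      have hmem : i ∈ Finset.univ.filter (fun i => g i = true) := by
        simp [hg]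
      rw [← heq] at hmem
      simp only [Finset.mem_filter, Finset.mem_univ, true_and] at hmem
      rw [hf] at hmem
      cases hmem

section Main
variable {Δ : Q → A → Q → Prop} {lt : Q → Q → Prop} {k : ℕ}

theorem transfer_main (hk : 1 ≤ k)
    {u : List A} (hu : u ≠ []) {L t t' : ℕ}
    (ht : 1 ≤ t) (htL : 1 + k * t ≤ L)
    (htrans : ∀ p q : Q, HasRun Δ p (wpow u t) q → HasRun Δ p (wpow u t') q)
    {x y : (Fin k → Q) × (Fin (k - 1) → Bool)}
    (hxy : HasRun (AkTrans Δ lt k) x (wpow u L) y) :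
    HasRun (AkTrans Δ lt k) x (wpow u (L - t + t')) y := by
  classical
  obtain ⟨s, hs0, hsL, hstep⟩ := steps_of_hasRun hxy
  -- bits are monotone along the block sequence
  have hbitstep : ∀ j < L, ∀ i, (s j).2 i = true → (s (j + 1)).2 i = true := by
    intro j hj i hi
    obtain ⟨rr, hr, hl⟩ := hstep j hj
    cases hb : (s (j + 1)).2 i with
    | true => rfl
    | false =>
      have hl' : lastS (s j) rr = s (j + 1) := hl
      have := (runFrom_bits_false hr (j := i) (by rw [hl']; exact hb)).1
      rw [this] at hi; cases hi
  have hbitmono : ∀ a b, a ≤ b → b ≤ L → ∀ i, (s a).2 i = true → (s b).2 i = true := by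
    intro a b hab hbL
    induction b, hab using Nat.le_induction with
    | base => exact fun i hi => hi
    | succ b hab ih =>
      intro i hi
      exact hbitstep b (by omega) i (ih (by omega) i hi)
  set g : ℕ → ℕ := fun j => (Finset.univ.filter (fun i => (s j).2 i = true)).card with hg
  have hgmono : ∀ a b, a ≤ b → b ≤ L → g a ≤ g b := by
    intro a b hab hbL
    apply Finset.card_le_card
    intro i hi
    simp only [Finset.mem_filter, Finset.mem_univ, true_and] at *
    exact hbitmono a b hab hbL i hi
  have hgbd : ∀ j, j ≤ L → g j ≤ k - 1 := by
    intro j _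
    calc g j ≤ Finset.univ.card := Finset.card_filter_le _ _
    _ = k - 1 := by simp
  obtain ⟨a, ha1, haL, hflat⟩ := exists_flat g k t L hgmono hgbd hk htL ht
  have hveq : (s a).2 = (s (a + t)).2 :=
    boolvec_eq (fun i => hbitmono a (a + t) (by omega) (by omega) i) hflat
  -- runs before / inside / after the stretch
  have hxa : HasRun (AkTrans Δ lt k) x (wpow u a) (s a) := by
    have := hasRun_of_steps hstep 0 a (by omega) (by omega)
    rw [Nat.sub_zero, hs0] at this
    exact this
  have hmid : HasRun (AkTrans Δ lt k) (s a) (wpow u t) (s (a + t)) := by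
    have := hasRun_of_steps hstep a (a + t) (by omega) (by omega)
    rw [Nat.add_sub_cancel_left] at this
    exact this
  have htail : HasRun (AkTrans Δ lt k) (s (a + t)) (wpow u (L - (a + t))) y := by
    have := hasRun_of_steps hstep (a + t) L (by omega) (by omega)
    rw [hsL] at this
    exact this
  -- merged entry into the stretch
  have hmerge : ∀ j : Fin (k - 1), (s a).2 j = false →
      (s a).1 (finL j) = (s a).1 (finR j) := by
    obtain ⟨rr, hr, hl⟩ := hxa
    intro j hj
    have hne : rr ≠ [] := runFrom_ne_nil hr (wpow_ne_nil hu ha1)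
    have hmem : lastS x rr ∈ rr := lastS_mem x hne
    have hl' : lastS x rr = s a := hl
    rw [hl'] at hmem
    exact runFrom_merge hr _ hmem j hj
  have hmid' : HasRun (AkTrans Δ lt k) (s a) (wpow u t') (s (a + t)) :=
    pump_stretch htrans hveq hmerge hmid
  have hcomb := (hxa.trans hmid').trans htail
  rw [← wpow_add, ← wpow_add] at hcomb
  rw [show L - t + t' = a + t' + (L - (a + t)) from by omega]
  exact hcomb

end Main


theorem aperiodicIdx_akTrans' (Δ : Q → A → Q → Prop) (lt : Q → Q → Prop)
    (m k : ℕ) (hk : 1 ≤ k)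
    (h : AperiodicIdx Δ m) : AperiodicIdx (AkTrans Δ lt k) (k * (m + 1)) := by
  obtain ⟨hm, hap⟩ := h
  have hkm : m + 1 ≤ k * (m + 1) := Nat.le_mul_of_pos_left (m + 1) hk
  have hkm2 : k * m + k = k * (m + 1) := by ring
  constructor
  · omega
  · intro p q u hu ℓ hℓ
    constructor
    · intro hrun
      have hres := transfer_main (lt := lt) hk hu hm (by omega)
        (fun p' q' hr => (hap p' q' u hu m le_rfl).mp hr) hrun
      rwa [show ℓ - m + (m + 1) = ℓ + 1 from by omega] at hres
    · intro hrun
      have hres := transfer_main (lt := lt) hk hu (by omega : 1 ≤ m + 1)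
        (by omega : 1 + k * (m + 1) ≤ ℓ + 1)
        (fun p' q' hr => (hap p' q' u hu m le_rfl).mpr hr) hrun
      rwa [show ℓ + 1 - (m + 1) + m = ℓ from by omega] at hres

/-- If `A` is aperiodic with index `m`, then `A_{≥k}` is aperiodic with index `k(m+1)`. -/
theorem aperiodicIdx_akTrans (Δ : Q → A → Q → Prop) (lt : Q → Q → Prop)
    [IsStrictTotalOrder Q lt] (m k : ℕ) (hk : 1 ≤ k)
    (h : AperiodicIdx Δ m) : AperiodicIdx (AkTrans Δ lt k) (k * (m + 1)) :=
  aperiodicIdx_akTrans' Δ lt m k hk h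
end
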